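/- Let α, β ∈ ℂ be distinct and let N, M be n×n complex matrices with N² = M² = 0. Assume Id + (α−β)^{−2}NM and Id + (β−α)^{−2}MN are invertible, and define N̂ = (Id + (α−β)^{−1}M)(Id + (α−β)^{−2}NM)^{−1}N(Id − (α−β)^{−1}M) and M̂ = (Id + (β−α)^{−1}N)(Id + (β−α)^{−2}MN)^{−1}M(Id − (β−α)^{−1}N). Then for every λ ∈ ℂ ∖ {α, β}, (Id + (λ−β)^{−1}M̂)(Id + (λ−α)^{−1}N) = (Id + (λ−α)^{−1}N̂)(Id + (λ−β)^{−1}M). -/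

import Mathlib

set_option synthInstance.maxHeartbeats 1000000
set_option maxHeartbeats 1000000

/-- **Permutability formula (Proposition 5.4).**  For `α ≠ β`, `N² = M² = 0` and
`N̂ = (Id + (α-β)⁻¹ M)(Id + (α-β)⁻² N M)⁻¹ N (Id - (α-β)⁻¹ M)`,
`M̂ = (Id + (β-α)⁻¹ N)(Id + (β-α)⁻² M N)⁻¹ M (Id - (β-α)⁻¹ N)`,
one has `m_{β,1,M̂} m_{α,1,N} = m_{α,1,N̂} m_{β,1,M}` away from `α` and `β`. -/
theorem permutability (n : ℕ) (α β : ℂ) (hαβ : α ≠ β)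
    (N M : Matrix (Fin n) (Fin n) ℂ) (hN : N * N = 0) (hM : M * M = 0)
    (hNM : IsUnit (1 + ((α - β)⁻¹) ^ 2 • (N * M)))
    (hMN : IsUnit (1 + ((β - α)⁻¹) ^ 2 • (M * N)))
    (Nh Mh : Matrix (Fin n) (Fin n) ℂ)
    (hNh : Nh = (1 + (α - β)⁻¹ • M) * (1 + ((α - β)⁻¹) ^ 2 • (N * M))⁻¹ * N *
      (1 - (α - β)⁻¹ • M))
    (hMh : Mh = (1 + (β - α)⁻¹ • N) * (1 + ((β - α)⁻¹) ^ 2 • (M * N))⁻¹ * M *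
      (1 - (β - α)⁻¹ • N)) :
    ∀ l : ℂ, l ≠ α → l ≠ β →
      (1 + (l - β)⁻¹ • Mh) * (1 + (l - α)⁻¹ • N) =
      (1 + (l - α)⁻¹ • Nh) * (1 + (l - β)⁻¹ • M) := by
  have hc : α - β ≠ 0 := sub_ne_zero.mpr hαβ
  set c : ℂ := (α - β)⁻¹ with hc_def
  have hβα : (β - α)⁻¹ = -c := by rw [hc_def, ← neg_sub α β, inv_neg]
  rw [hβα] at hMh hMN
  have hc2 : ((-c) : ℂ) ^ 2 = c ^ 2 := by ring
  rw [hc2] at hMh hMN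
  rw [neg_smul, ← sub_eq_add_neg, sub_neg_eq_add] at hMh
  set A : Matrix (Fin n) (Fin n) ℂ := 1 + c ^ 2 • (N * M) with hA_def
  set B : Matrix (Fin n) (Fin n) ℂ := 1 + c ^ 2 • (M * N) with hB_def
  have hAd := (Matrix.isUnit_iff_isUnit_det A).mp hNM
  have hBd := (Matrix.isUnit_iff_isUnit_det B).mp hMN
  have hA1 : A * A⁻¹ = 1 := Matrix.mul_nonsing_inv A hAd
  have hA2 : A⁻¹ * A = 1 := Matrix.nonsing_inv_mul A hAd
  have hB1 : B * B⁻¹ = 1 := Matrix.mul_nonsing_inv B hBd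
  have hB2 : B⁻¹ * B = 1 := Matrix.nonsing_inv_mul B hBd
  -- basic absorption facts
  have hNB : N * B = A * N := by
    rw [hA_def, hB_def, mul_add, add_mul, mul_one, one_mul, mul_smul_comm, smul_mul_assoc,
      mul_assoc]
  have hMA : M * A = B * M := by
    rw [hA_def, hB_def, mul_add, add_mul, mul_one, one_mul, mul_smul_comm, smul_mul_assoc,
      mul_assoc]
  set X : Matrix (Fin n) (Fin n) ℂ := A⁻¹ * N with hX_def
  set Y : Matrix (Fin n) (Fin n) ℂ := B⁻¹ * M with hY_def
  have hXalt : X = N * B⁻¹ := by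
    have h1 : X * B = N := by rw [hX_def, mul_assoc, hNB, ← mul_assoc, hA2, one_mul]
    rw [← h1, mul_assoc, hB1, mul_one]
  have hYalt : Y = M * A⁻¹ := by
    have h1 : Y * A = M := by rw [hY_def, mul_assoc, hMA, ← mul_assoc, hB2, one_mul]
    rw [← h1, mul_assoc, hA1, mul_one]
  have hMX : M * X = Y * N := by rw [hX_def, hYalt, ← mul_assoc]
  have hXM : X * M = N * Y := by rw [hXalt, hY_def, mul_assoc]
  have hAX : A * X = N := by rw [hX_def, ← mul_assoc, hA1, one_mul]
  have hBY : B * Y = M := by rw [hY_def, ← mul_assoc, hB1, one_mul]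
  have hXeq' : X = N - c ^ 2 • (N * (Y * N)) := by
    have h := hAX
    rw [hA_def, add_mul, one_mul, smul_mul_assoc, mul_assoc, hMX] at h
    exact eq_sub_of_add_eq h
  have hYeq' : Y = M - c ^ 2 • (M * (N * Y)) := by
    have h := hBY
    rw [hB_def, add_mul, one_mul, smul_mul_assoc, mul_assoc] at h
    exact eq_sub_of_add_eq h
  -- expansions of Nh, Mh
  have hNh2 : Nh = X - c • (X * M) + c • (M * X) - c ^ 2 • (M * (X * M)) := by
    rw [hNh, mul_assoc (1 + c • M) A⁻¹ N, ← hX_def]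
    simp only [add_mul, sub_mul, mul_sub, mul_add, one_mul, mul_one, smul_mul_assoc,
      mul_smul_comm, smul_smul, mul_assoc]
    module
  have hMh2 : Mh = Y + c • (Y * N) - c • (N * Y) - c ^ 2 • (N * (Y * N)) := by
    rw [hMh, mul_assoc (1 - c • N) B⁻¹ M, ← hY_def]
    simp only [add_mul, sub_mul, mul_sub, mul_add, one_mul, mul_one, smul_mul_assoc,
      mul_smul_comm, smul_smul, mul_assoc]
    module
  have hMhN : Mh * N = Y * N - c • (N * (Y * N)) := by
    rw [hMh2]
    simp only [add_mul, sub_mul, smul_mul_assoc, mul_assoc, hN, mul_zero, smul_zero,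
      add_zero, sub_zero]
  have hNhM : Nh * M = X * M + c • (M * (X * M)) := by
    rw [hNh2]
    simp only [add_mul, sub_mul, smul_mul_assoc, mul_assoc, hM, mul_zero, smul_zero,
      add_zero, sub_zero]
  -- the two key residue identities
  have keyI : Nh = N + c • (Mh * N - Nh * M) := by
    rw [hMhN, hNhM, hNh2, hMX]
    nth_rewrite 1 [hXeq']
    module
  have keyII : Mh = M + c • (Mh * N - Nh * M) := by
    rw [hMhN, hNhM, hMh2, hXM]
    nth_rewrite 1 [hYeq']
    module
  set P : Matrix (Fin n) (Fin n) ℂ := Mh * N - Nh * M with hP_def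
  -- final assembly
  intro l hlα hlβ
  have hla : l - α ≠ 0 := sub_ne_zero.mpr hlα
  have hlb : l - β ≠ 0 := sub_ne_zero.mpr hlβ
  set a : ℂ := (l - α)⁻¹ with ha_def
  set b : ℂ := (l - β)⁻¹ with hb_def
  have hab : a * b = c * (a - b) := by
    rw [ha_def, hb_def, hc_def]
    field_simp
    ring
  rw [← sub_eq_zero]
  have h2 : (1 + b • Mh) * (1 + a • N) - (1 + a • Nh) * (1 + b • M)
      = a • (N - Nh) + b • (Mh - M) + (a * b) • (Mh * N - Nh * M) := by
    simp only [mul_add, add_mul, mul_one, one_mul, smul_mul_assoc, mul_smul_comm, smul_smul,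
      smul_sub]
    module
  rw [h2, ← hP_def, keyI, keyII]
  have h3 : a • (N - (N + c • P)) + b • ((M + c • P) - M) + (a * b) • P
      = (a * b + (b * c - a * c)) • P := by module
  rw [h3]
  have hs : a * b + (b * c - a * c) = 0 := by linear_combination hab
  rw [hs, zero_smul]
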